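/- Fix θ > 0, and let h_θ(x) = x·Ψ(g_θ^{-1}(x)) + Ψ(θ - g_θ^{-1}(x)) for x ∈ (0,∞). Then h_θ'(x) = Ψ(g_θ^{-1}(x)) for all x > 0; in particular h_θ' is strictly increasing on (0,∞) and h_θ'(1) = Ψ(θ/2). -/

import Mathlib

open Real Set

/-- The digamma function, defined by its series representation. -/
noncomputable def digamma (z : ℝ) : ℝ :=
  -Real.eulerMascheroniConstant + ∑' n : ℕ, (1 / ((n : ℝ) + 1) - 1 / ((n : ℝ) + z))

/-- The function `g_θ(z) = (Σ_{n≥0} 1/(n+θ-z)²)/(Σ_{n≥0} 1/(n+z)²)`. -/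
noncomputable def gFun (θ z : ℝ) : ℝ :=
  (∑' n : ℕ, 1 / ((n : ℝ) + θ - z) ^ 2) / (∑' n : ℕ, 1 / ((n : ℝ) + z) ^ 2)

/-- The trigamma function. -/
noncomputable def trig (z : ℝ) : ℝ := ∑' n : ℕ, 1 / ((n : ℝ) + z) ^ 2

lemma base_summable : Summable (fun n : ℕ => 1 / ((n : ℝ) + 1) ^ 2) := by
  have h : Summable (fun n : ℕ => 1 / ((n : ℝ)) ^ 2) :=
    Real.summable_one_div_nat_pow.2 one_lt_two
  have := (summable_nat_add_iff 1).2 h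
  refine this.congr fun n => ?_
  push_cast
  ring

lemma term_le {z : ℝ} (hz : 0 < z) (n : ℕ) :
    1 / ((n : ℝ) + z) ^ 2 ≤ (1 / (min 1 z) ^ 2) * (1 / ((n : ℝ) + 1) ^ 2) := by
  have hm0 : 0 < min 1 z := lt_min one_pos hz
  have hm1 : min 1 z ≤ 1 := min_le_left _ _
  have hmz : min 1 z ≤ z := min_le_right _ _
  have hn : (0 : ℝ) ≤ (n : ℝ) := Nat.cast_nonneg n
  have key : min 1 z * ((n : ℝ) + 1) ≤ (n : ℝ) + z := by nlinarith
  have h1 : 0 < min 1 z * ((n : ℝ) + 1) := by positivity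
  have h2 : (min 1 z * ((n : ℝ) + 1)) ^ 2 ≤ ((n : ℝ) + z) ^ 2 := by nlinarith
  have := one_div_le_one_div_of_le (by positivity) h2
  calc 1 / ((n : ℝ) + z) ^ 2 ≤ 1 / (min 1 z * ((n : ℝ) + 1)) ^ 2 := this
    _ = (1 / (min 1 z) ^ 2) * (1 / ((n : ℝ) + 1) ^ 2) := by
        rw [mul_pow, one_div, one_div, one_div, mul_inv]

lemma trig_summable {z : ℝ} (hz : 0 < z) :
    Summable (fun n : ℕ => 1 / ((n : ℝ) + z) ^ 2) := by
  refine Summable.of_nonneg_of_le (fun n => by positivity) (term_le hz)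
    (base_summable.mul_left _)

lemma trig_pos {z : ℝ} (hz : 0 < z) : 0 < trig z := by
  refine Summable.tsum_pos (trig_summable hz) (fun n => by positivity) 0 ?_
  norm_num
  positivity

lemma trig_strictAnti : StrictAntiOn trig (Set.Ioi (0 : ℝ)) := by
  intro a ha b hb hab
  simp only [mem_Ioi] at ha hb
  refine Summable.tsum_lt_tsum (f := fun n : ℕ => 1 / ((n : ℝ) + b) ^ 2)
    (g := fun n : ℕ => 1 / ((n : ℝ) + a) ^ 2) (fun n => ?_) (i := 0) ?_
    (trig_summable hb) (trig_summable ha)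
  · have h1 : (0:ℝ) < (n : ℝ) + a := by positivity
    have h2 : ((n:ℝ) + a) ^ 2 ≤ ((n:ℝ) + b) ^ 2 := by nlinarith
    exact one_div_le_one_div_of_le (by positivity) h2
  · have h1 : (0:ℝ) < (0 : ℝ) + a := by positivity
    have h2 : ((0:ℝ) + a) ^ 2 < ((0:ℝ) + b) ^ 2 := by nlinarith
    simpa using one_div_lt_one_div_of_lt (by positivity) h2

lemma dterm_eq {z : ℝ} (hz : 0 < z) (n : ℕ) :
    1 / ((n : ℝ) + 1) - 1 / ((n : ℝ) + z) = (z - 1) / (((n : ℝ) + 1) * ((n : ℝ) + z)) := by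
  have h1 : ((n : ℝ) + 1) ≠ 0 := by positivity
  have h2 : ((n : ℝ) + z) ≠ 0 := by positivity
  field_simp
  ring

lemma dterm_summable {z : ℝ} (hz : 0 < z) :
    Summable (fun n : ℕ => 1 / ((n : ℝ) + 1) - 1 / ((n : ℝ) + z)) := by
  have hm0 : 0 < min 1 z := lt_min one_pos hz
  refine Summable.of_norm_bounded
    (g := fun n => (|z - 1| / min 1 z) * (1 / ((n : ℝ) + 1) ^ 2))
    (base_summable.mul_left _) (fun n => ?_)
  rw [Real.norm_eq_abs, dterm_eq hz, abs_div]
  have hm1 : min 1 z ≤ 1 := min_le_left _ _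
  have hmz : min 1 z ≤ z := min_le_right _ _
  have hn : (0 : ℝ) ≤ (n : ℝ) := Nat.cast_nonneg n
  have hden : 0 < ((n : ℝ) + 1) * ((n : ℝ) + z) := by positivity
  rw [abs_of_pos hden]
  rw [div_le_iff₀ hden]
  have key : min 1 z * ((n : ℝ) + 1) ≤ (n : ℝ) + z := by nlinarith
  have habs : (0:ℝ) ≤ |z - 1| := abs_nonneg _
  have expand : |z - 1| / min 1 z * (1 / ((n : ℝ) + 1) ^ 2) * (((n : ℝ) + 1) * ((n : ℝ) + z))
      = |z - 1| * (((n : ℝ) + z) / (min 1 z * ((n:ℝ)+1))) := by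
    field_simp
  rw [expand]
  have h2 : (1:ℝ) ≤ ((n : ℝ) + z) / (min 1 z * ((n:ℝ)+1)) := by
    rw [le_div_iff₀ (by positivity)]
    linarith
  nlinarith

lemma hasDerivAt_digamma {z : ℝ} (hz : 0 < z) : HasDerivAt digamma (trig z) z := by
  have h2 : 0 < z / 2 := by linarith
  have key : HasDerivAt (fun y => ∑' n : ℕ, (1 / ((n : ℝ) + 1) - 1 / ((n : ℝ) + y)))
      (∑' n : ℕ, 1 / ((n : ℝ) + z) ^ 2) z := by
    refine hasDerivAt_tsum_of_isPreconnected (u := fun n : ℕ => 1 / ((n : ℝ) + z / 2) ^ 2)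
      (trig_summable h2) (isOpen_Ioi (a := z / 2)) (isPreconnected_Ioi)
      (g' := fun n y => 1 / ((n : ℝ) + y) ^ 2)
      (fun n y hy => ?_) (fun n y hy => ?_) (y₀ := z) (by simpa using half_lt_self hz)
      (dterm_summable hz) (by simpa using half_lt_self hz)
    · simp only [mem_Ioi] at hy
      have hy0 : 0 < y := lt_trans h2 hy
      have hne : (n : ℝ) + y ≠ 0 := by positivity
      have hinv : HasDerivAt (fun w : ℝ => ((n : ℝ) + w)⁻¹)
          (-1 / ((n : ℝ) + y) ^ 2) y := by
        have hid : HasDerivAt (fun w : ℝ => (n : ℝ) + w) 1 y := (hasDerivAt_id y).const_add _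
        have := hid.inv hne
        exact this
      have := hinv.const_sub (1 / ((n : ℝ) + 1))
      convert this using 1
      · funext w; simp [one_div]
      · field_simp
    · simp only [mem_Ioi] at hy
      rw [Real.norm_eq_abs]
      have hy0 : 0 < y := lt_trans h2 hy
      have h1 : (0:ℝ) < (n : ℝ) + z / 2 := by positivity
      have h2' : ((n:ℝ) + z/2) ^ 2 ≤ ((n:ℝ) + y) ^ 2 := by nlinarith
      rw [abs_of_pos (by positivity)]
      exact one_div_le_one_div_of_le (by positivity) h2'
  have := key.const_add (-Real.eulerMascheroniConstant)
  exact this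

lemma gFun_eq (θ z : ℝ) : gFun θ z = trig (θ - z) / trig z := by
  unfold gFun trig
  congr 1
  exact tsum_congr fun n => by rw [add_sub_assoc]

lemma gFun_strictMono {θ : ℝ} (hθ : 0 < θ) : StrictMonoOn (gFun θ) (Set.Ioo 0 θ) := by
  intro a ha b hb hab
  obtain ⟨ha0, haθ⟩ := ha
  obtain ⟨hb0, hbθ⟩ := hb
  rw [gFun_eq, gFun_eq]
  have h1 : trig (θ - a) < trig (θ - b) :=
    trig_strictAnti (show θ - b ∈ Set.Ioi (0:ℝ) by simp only [mem_Ioi]; linarith)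
      (show θ - a ∈ Set.Ioi (0:ℝ) by simp only [mem_Ioi]; linarith) (by linarith)
  have h2 : trig b < trig a := trig_strictAnti (mem_Ioi.2 ha0) (mem_Ioi.2 hb0) hab
  have p1 : 0 < trig a := trig_pos ha0
  have p2 : 0 < trig b := trig_pos hb0
  have p3 : 0 < trig (θ - a) := trig_pos (by linarith)
  have p4 : 0 < trig (θ - b) := trig_pos (by linarith)
  rw [div_lt_div_iff₀ p1 p2]
  nlinarith

lemma digamma_strictMono : StrictMonoOn digamma (Set.Ioi (0 : ℝ)) := by
  intro a ha b hb hab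
  simp only [mem_Ioi] at ha hb
  unfold digamma
  have : (∑' n : ℕ, (1 / ((n : ℝ) + 1) - 1 / ((n : ℝ) + a)))
      < ∑' n : ℕ, (1 / ((n : ℝ) + 1) - 1 / ((n : ℝ) + b)) := by
    refine Summable.tsum_lt_tsum (fun n => ?_) (i := 0) ?_ (dterm_summable ha) (dterm_summable hb)
    · have h1 : (0:ℝ) < (n : ℝ) + a := by positivity
      have : 1 / ((n:ℝ) + b) ≤ 1 / ((n:ℝ) + a) :=
        one_div_le_one_div_of_le h1 (by linarith)
      linarith
    · have h1 : (0:ℝ) < (0:ℕ) + a := by simpa using ha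
      have : 1 / ((0:ℕ) + b : ℝ) < 1 / ((0:ℕ) + a : ℝ) := by
        refine one_div_lt_one_div_of_lt (by simpa using ha) (by push_cast; linarith)
      push_cast at this ⊢
      linarith
  linarith

/-- Derivative of `w ↦ y * digamma w + digamma (θ - w)`. -/
lemma hasDerivAt_phi {θ y v : ℝ} (hv : v ∈ Set.Ioo 0 θ) :
    HasDerivAt (fun w => y * digamma w + digamma (θ - w))
      (y * trig v - trig (θ - v)) v := by
  obtain ⟨hv0, hvθ⟩ := hv
  have h1 : HasDerivAt (fun w => y * digamma w) (y * trig v) v :=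
    (hasDerivAt_digamma hv0).const_mul y
  have hin : HasDerivAt (fun w : ℝ => θ - w) (-1) v := (hasDerivAt_id v).const_sub θ
  have h2 : HasDerivAt (fun w => digamma (θ - w)) (trig (θ - v) * (-1)) v :=
    (hasDerivAt_digamma (by linarith : (0:ℝ) < θ - v)).comp v hin
  have := h1.add h2
  exact this.congr_deriv (by ring)

/-- Key inequality: `u y` maximizes `w ↦ y ψ(w) + ψ(θ - w)` over `(0, θ)`. -/
lemma key_ineq {θ : ℝ} (hθ : 0 < θ) {y : ℝ} (hy : 0 < y) {b : ℝ} (hb : b ∈ Set.Ioo 0 θ)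
    (hgb : gFun θ b = y) {w : ℝ} (hw : w ∈ Set.Ioo 0 θ) :
    y * digamma w + digamma (θ - w) ≤ y * digamma b + digamma (θ - b) := by
  set φ := fun w => y * digamma w + digamma (θ - w) with hφ
  have hcont : ∀ s : Set ℝ, s ⊆ Set.Ioo 0 θ → ContinuousOn φ s := by
    intro s hs
    intro v hv
    exact ((hasDerivAt_phi (hs hv)).continuousAt).continuousWithinAt
  have hderiv : ∀ v ∈ Set.Ioo 0 θ, deriv φ v = y * trig v - trig (θ - v) :=
    fun v hv => (hasDerivAt_phi hv).deriv
  rcases lt_trichotomy w b with hlt | heq | hgt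
  · -- φ strictly mono on [w, b]
    have hsub : Set.Icc w b ⊆ Set.Ioo 0 θ := fun v hv =>
      ⟨lt_of_lt_of_le hw.1 hv.1, lt_of_le_of_lt hv.2 hb.2⟩
    have := strictMonoOn_of_deriv_pos (convex_Icc w b) (hcont _ hsub) (fun v hv => ?_)
    · exact le_of_lt (this ⟨le_refl w, le_of_lt hlt⟩ ⟨le_of_lt hlt, le_refl b⟩ hlt)
    · rw [interior_Icc] at hv
      have hvmem : v ∈ Set.Ioo 0 θ := ⟨lt_trans hw.1 hv.1, lt_trans hv.2 hb.2⟩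
      rw [hderiv v hvmem]
      have : gFun θ v < gFun θ b := gFun_strictMono hθ hvmem hb hv.2
      rw [hgb, gFun_eq] at this
      have pv : 0 < trig v := trig_pos hvmem.1
      rw [div_lt_iff₀ pv] at this
      linarith
  · rw [heq]
  · -- φ strictly anti on [b, w]
    have hsub : Set.Icc b w ⊆ Set.Ioo 0 θ := fun v hv =>
      ⟨lt_of_lt_of_le hb.1 hv.1, lt_of_le_of_lt hv.2 hw.2⟩
    have := strictAntiOn_of_deriv_neg (convex_Icc b w) (hcont _ hsub) (fun v hv => ?_)
    · exact le_of_lt (this ⟨le_refl b, le_of_lt hgt⟩ ⟨le_of_lt hgt, le_refl w⟩ hgt)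
    · rw [interior_Icc] at hv
      have hvmem : v ∈ Set.Ioo 0 θ := ⟨lt_trans hb.1 hv.1, lt_trans hv.2 hw.2⟩
      rw [hderiv v hvmem]
      have : gFun θ b < gFun θ v := gFun_strictMono hθ hb hvmem hv.1
      rw [hgb, gFun_eq] at this
      have pv : 0 < trig v := trig_pos hvmem.1
      rw [lt_div_iff₀ pv] at this
      linarith

/-- Let `u = g_θ⁻¹` and `h_θ(x) = x Ψ(u(x)) + Ψ(θ - u(x))`. Then `h_θ'(x) = Ψ(u(x))`
for all `x > 0`; in particular `h_θ'` is strictly increasing on `(0,∞)` and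
`h_θ'(1) = Ψ(θ/2)`. -/
theorem hTheta_deriv (θ : ℝ) (hθ : 0 < θ) (u : ℝ → ℝ)
    (hu : ∀ x : ℝ, 0 < x → u x ∈ Set.Ioo 0 θ ∧ gFun θ (u x) = x) :
    (∀ x ∈ Set.Ioi (0 : ℝ),
      HasDerivAt (fun y => y * digamma (u y) + digamma (θ - u y)) (digamma (u x)) x) ∧
    StrictMonoOn (fun x => digamma (u x)) (Set.Ioi (0 : ℝ)) ∧
    digamma (u 1) = digamma (θ / 2) := by
  -- u is strictly monotone on (0, ∞)
  have umono : StrictMonoOn u (Set.Ioi (0 : ℝ)) := by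
    intro x hx y hy hxy
    simp only [mem_Ioi] at hx hy
    obtain ⟨hux, hgx⟩ := hu x hx
    obtain ⟨huy, hgy⟩ := hu y hy
    by_contra h
    push_neg at h
    have : gFun θ (u y) ≤ gFun θ (u x) := by
      rcases eq_or_lt_of_le h with heq | hlt
      · rw [heq]
      · exact le_of_lt (gFun_strictMono hθ huy hux hlt)
    rw [hgx, hgy] at this
    linarith
  -- u is continuous at every x > 0
  have ucont : ∀ x : ℝ, 0 < x → ContinuousAt u x := by
    intro x hx
    obtain ⟨hux, hgx⟩ := hu x hx
    rw [ContinuousAt]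
    apply tendsto_order.2
    constructor
    · intro a ha
      set a' := max a (u x / 2) with ha'
      have ha'0 : 0 < a' := lt_max_of_lt_right (by linarith [hux.1])
      have ha'x : a' < u x := max_lt ha (by linarith [hux.1])
      have ha'mem : a' ∈ Set.Ioo 0 θ := ⟨ha'0, lt_trans ha'x hux.2⟩
      have hga : gFun θ a' < x := by
        have := gFun_strictMono hθ ha'mem hux ha'x
        rwa [hgx] at this
      filter_upwards [eventually_gt_nhds hga, eventually_gt_nhds hx] with y hy1 hy2
      obtain ⟨huy, hgy⟩ := hu y hy2
      have : gFun θ a' < gFun θ (u y) := by rw [hgy]; exact hy1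
      have : a' < u y := by
        by_contra hcon
        push_neg at hcon
        rcases eq_or_lt_of_le hcon with heq | hlt
        · rw [heq] at this; linarith
        · have := gFun_strictMono hθ huy ha'mem hlt
          linarith
      exact lt_of_le_of_lt (le_max_left a (u x / 2)) this
    · intro b hb
      set b' := min b ((u x + θ) / 2) with hb'
      have hb'x : u x < b' := lt_min hb (by linarith [hux.2])
      have hb'θ : b' < θ := lt_of_le_of_lt (min_le_right _ _) (by linarith [hux.2])
      have hb'mem : b' ∈ Set.Ioo 0 θ := ⟨lt_trans hux.1 hb'x, hb'θ⟩
      have hgb : x < gFun θ b' := by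
        have := gFun_strictMono hθ hux hb'mem hb'x
        rwa [hgx] at this
      filter_upwards [eventually_lt_nhds hgb, eventually_gt_nhds hx] with y hy1 hy2
      obtain ⟨huy, hgy⟩ := hu y hy2
      have : gFun θ (u y) < gFun θ b' := by rw [hgy]; exact hy1
      have : u y < b' := by
        by_contra hcon
        push_neg at hcon
        rcases eq_or_lt_of_le hcon with heq | hlt
        · rw [← heq] at this; linarith
        · have := gFun_strictMono hθ hb'mem huy hlt
          linarith
      exact lt_of_lt_of_le this (min_le_left _ _)
  refine ⟨?_, ?_, ?_⟩
  · -- the derivative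
    intro x hx
    simp only [mem_Ioi] at hx
    obtain ⟨hux, hgx⟩ := hu x hx
    rw [hasDerivAt_iff_isLittleO, Asymptotics.isLittleO_iff]
    intro c hc
    have hcont : Filter.Tendsto (fun y => digamma (u y)) (nhds x) (nhds (digamma (u x))) :=
      ((hasDerivAt_digamma hux.1).continuousAt.comp (ucont x hx))
    filter_upwards [eventually_gt_nhds hx,
      hcont.eventually (eventually_abs_sub_lt (digamma (u x)) hc)] with y hy hclose
    obtain ⟨huy, hgy⟩ := hu y hy
    -- lower bound: h y ≥ h x + (y - x) ψ(u x)
    have low : y * digamma (u x) + digamma (θ - u x)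
        ≤ y * digamma (u y) + digamma (θ - u y) :=
      key_ineq hθ hy huy hgy hux
    -- upper bound: h x ≥ h y - (y - x) ψ(u y)
    have upp : x * digamma (u y) + digamma (θ - u y)
        ≤ x * digamma (u x) + digamma (θ - u x) :=
      key_ineq hθ hx hux hgx huy
    set A := (y * digamma (u y) + digamma (θ - u y))
      - (x * digamma (u x) + digamma (θ - u x)) - (y - x) * digamma (u x) with hA
    have hA0 : 0 ≤ A := by rw [hA]; nlinarith
    have hA1 : A ≤ (y - x) * (digamma (u y) - digamma (u x)) := by rw [hA]; nlinarith
    have habs : |A| ≤ c * |y - x| := by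
      rw [abs_of_nonneg hA0]
      calc A ≤ (y - x) * (digamma (u y) - digamma (u x)) := hA1
        _ ≤ |(y - x) * (digamma (u y) - digamma (u x))| := le_abs_self _
        _ = |y - x| * |digamma (u y) - digamma (u x)| := abs_mul _ _
        _ ≤ |y - x| * c := by
            exact mul_le_mul_of_nonneg_left (le_of_lt hclose) (abs_nonneg _)
        _ = c * |y - x| := mul_comm _ _
    simp only [Real.norm_eq_abs, smul_eq_mul]
    convert habs using 2
  · -- strict monotonicity
    intro x hx y hy hxy
    simp only [mem_Ioi] at hx hy
    obtain ⟨hux, _⟩ := hu x hx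
    obtain ⟨huy, _⟩ := hu y hy
    exact digamma_strictMono (mem_Ioi.2 hux.1) (mem_Ioi.2 huy.1) (umono hx hy hxy)
  · -- value at 1
    obtain ⟨hu1, hg1⟩ := hu 1 one_pos
    rw [gFun_eq] at hg1
    have p1 : 0 < trig (u 1) := trig_pos hu1.1
    have p2 : 0 < trig (θ - u 1) := trig_pos (by linarith [hu1.2])
    have heq : trig (θ - u 1) = trig (u 1) := by
      field_simp at hg1
      linarith
    have : θ - u 1 = u 1 := by
      by_contra hne
      rcases lt_or_gt_of_ne hne with hlt | hgt
      · have := trig_strictAnti (mem_Ioi.2 (by linarith [hu1.2])) (mem_Ioi.2 hu1.1) hlt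
        linarith
      · have := trig_strictAnti (mem_Ioi.2 hu1.1) (mem_Ioi.2 (by linarith [hu1.2])) hgt
        linarith
    have : u 1 = θ / 2 := by linarith
    rw [this]
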